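/- Let G₁ be the graph on n vertices with no edges and let G₂, ..., G_k be k−1 graphs each isomorphic to G₁. Let G̃ be the graph obtained from G₁, G₂, ..., G_k by connecting each vertex of G_j to every vertex of G_{j+1}, for j = 1, ..., k−1. Then the energy of G̃ equals Σ_{j=1}^{k} |2n cos(jπ/(k+1))|. -/

import Mathlib

open Matrix Polynomial SimpleGraph Kronecker

/-- The energy of a real square matrix: the sum of the absolute values of its
eigenvalues (roots of the characteristic polynomial), with multiplicity. -/
noncomputable def energy {ι : Type*} [Fintype ι] [DecidableEq ι]
    (M : Matrix ι ι ℝ) : ℝ :=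
  (M.charpoly.roots.map fun x => |x|).sum


lemma my_key (θ t : ℝ) : Real.sin (t*θ) + Real.sin ((t+2)*θ)
    = 2*Real.cos θ * Real.sin ((t+1)*θ) := by
  have h1 : t*θ = (t+1)*θ - θ := by ring
  have h2 : (t+2)*θ = (t+1)*θ + θ := by ring
  rw [h1, h2, Real.sin_add, Real.sin_sub]; ring

lemma my_path_row (k : ℕ) (c θ : ℝ) (hθ : Real.sin (((k:ℝ)+2) * θ) = 0) (i : Fin (k+1)) :
    ∑ q : Fin (k+1), (if i.val+1=q.val ∨ q.val+1=i.val then c else 0) * Real.sin (((q.val:ℝ)+1) * θ)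
    = 2*c*Real.cos θ * Real.sin (((i.val:ℝ)+1) * θ) := by
  have hsplit : ∀ q : Fin (k+1),
      (if i.val+1=q.val ∨ q.val+1=i.val then c else 0) * Real.sin (((q.val:ℝ)+1) * θ)
      = (if i.val+1=q.val then c * Real.sin (((q.val:ℝ)+1)*θ) else 0)
        + (if q.val+1=i.val then c * Real.sin (((q.val:ℝ)+1)*θ) else 0) := by
    intro q
    by_cases h1 : i.val+1=q.val <;> by_cases h2 : q.val+1=i.val
    · omega
    all_goals simp [h1, h2]
  rw [Finset.sum_congr rfl fun q _ => hsplit q, Finset.sum_add_distrib]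
  have hA : ∑ q : Fin (k+1), (if i.val+1=q.val then c * Real.sin (((q.val:ℝ)+1)*θ) else 0)
      = c * Real.sin (((i.val:ℝ)+2) * θ) := by
    by_cases hik : i.val < k
    · rw [Finset.sum_eq_single (⟨i.val+1, by omega⟩ : Fin (k+1))]
      · rw [if_pos rfl]
        simp only [Fin.val_mk]; push_cast; ring_nf
      · intro b _ hb
        rw [if_neg]
        intro h; exact hb (Fin.ext (by simp only [Fin.val_mk]; omega))
      · simp
    · have hik' : i.val = k := by omega
      have h0 : Real.sin (((i.val:ℝ)+2)*θ) = 0 := by rw [hik']; exact hθ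
      rw [h0, mul_zero, Finset.sum_eq_zero]
      intro q _
      rw [if_neg]
      have := q.isLt; omega
  have hB : ∑ q : Fin (k+1), (if q.val+1=i.val then c * Real.sin (((q.val:ℝ)+1)*θ) else 0)
      = c * Real.sin ((i.val:ℝ) * θ) := by
    by_cases hi0 : 0 < i.val
    · obtain ⟨t, ht⟩ : ∃ t, i.val = t+1 := ⟨i.val-1, by omega⟩
      rw [Finset.sum_eq_single (⟨t, by have := i.isLt; omega⟩ : Fin (k+1))]
      · rw [if_pos (by simp only [Fin.val_mk]; omega)]
        simp only [Fin.val_mk]; rw [ht]; push_cast; ring_nf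
      · intro b _ hb
        rw [if_neg]
        intro h; exact hb (Fin.ext (by simp only [Fin.val_mk]; omega))
      · simp [ht]
    · have hi0' : i.val = 0 := by omega
      rw [hi0']
      rw [Finset.sum_eq_zero, Nat.cast_zero, zero_mul, Real.sin_zero, mul_zero]
      intro q _
      rw [if_neg]; omega
  rw [hA, hB]
  linear_combination c * my_key θ (i.val : ℝ)


lemma my_eq_prod {m : ℕ} (p : ℝ[X]) (hm : p.Monic) (hd : p.natDegree = m)
    (c : Fin m → ℝ) (hinj : Function.Injective c) (hroot : ∀ j, p.eval (c j) = 0) :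
    p = ∏ j : Fin m, (X - C (c j)) := by
  set q : ℝ[X] := ∏ j : Fin m, (X - C (c j)) with hq
  have hqm : q.Monic := monic_prod_of_monic _ _ fun _ _ => monic_X_sub_C _
  have hqd : q.natDegree = m := by
    rw [hq, natDegree_prod_of_monic _ _ fun _ _ => monic_X_sub_C _]
    simp
  have hdvd : q ∣ p := by
    refine Finset.prod_dvd_of_coprime ?_ fun j _ => ?_
    · exact ((pairwise_coprime_X_sub_C hinj).set_pairwise _)
    · exact dvd_iff_isRoot.2 (hroot j)
  obtain ⟨r, hr⟩ := hdvd
  have hrm : r.Monic := hqm.of_mul_monic_left (hr ▸ hm)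
  have hrd : r.natDegree = 0 := by
    have := hd
    rw [hr, natDegree_mul hqm.ne_zero hrm.ne_zero, hqd] at this
    omega
  rw [hr, eq_one_of_monic_natDegree_zero hrm hrd, mul_one]

lemma my_eval_charpoly {ι : Type*} [Fintype ι] [DecidableEq ι] (M : Matrix ι ι ℝ) (r : ℝ) :
    (M.charpoly).eval r = (r • (1 : Matrix ι ι ℝ) - M).det := by
  rw [Matrix.charpoly, ← coe_evalRingHom, RingHom.map_det]
  congr 1; ext i j
  by_cases h : i = j <;>
    simp [h, Matrix.charmatrix_apply_eq, Matrix.charmatrix_apply_ne, Matrix.one_apply,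
      Matrix.sub_apply]

lemma my_root_of_eigen {ι : Type*} [Fintype ι] [DecidableEq ι]
    (M : Matrix ι ι ℝ) (r : ℝ) (v : ι → ℝ) (hv : v ≠ 0)
    (h : M *ᵥ v = r • v) : (M.charpoly).eval r = 0 := by
  rw [my_eval_charpoly, ← Matrix.exists_mulVec_eq_zero_iff]
  exact ⟨v, hv, by simp [Matrix.sub_mulVec, h, Matrix.smul_mulVec]⟩

lemma my_path_charpoly (n k : ℕ) (hn : 0 < n) :
    (Matrix.charpoly (Matrix.of fun i j => if i.val+1=j.val ∨ j.val+1=i.val then (n:ℝ) else 0 :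
        Matrix (Fin (k+1)) (Fin (k+1)) ℝ))
    = ∏ j : Fin (k+1), (X - C (2*(n:ℝ)*Real.cos (((j.val:ℝ)+1)*Real.pi/((k:ℝ)+2)))) := by
  set Q : Matrix (Fin (k+1)) (Fin (k+1)) ℝ :=
    Matrix.of fun i j => if i.val+1=j.val ∨ j.val+1=i.val then (n:ℝ) else 0 with hQ
  set c : Fin (k+1) → ℝ := fun j => 2*(n:ℝ)*Real.cos (((j.val:ℝ)+1)*Real.pi/((k:ℝ)+2)) with hc
  have hk2 : ((k:ℝ)+2) ≠ 0 := by positivity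
  have hθmem : ∀ j : Fin (k+1), ((j.val:ℝ)+1)*Real.pi/((k:ℝ)+2) ∈ Set.Icc 0 Real.pi := by
    intro j
    constructor
    · positivity
    · rw [div_le_iff₀ (by positivity)]
      have h0 : (j.val:ℕ) ≤ k := by omega
      have h1 : (j.val:ℝ) ≤ (k:ℝ) := Nat.cast_le.2 h0
      nlinarith [Real.pi_pos]
  apply my_eq_prod
  · exact Matrix.charpoly_monic Q
  · rw [Matrix.charpoly_natDegree_eq_dim]; simp
  · -- injectivity
    intro j1 j2 h
    have h2 : Real.cos (((j1.val:ℝ)+1)*Real.pi/((k:ℝ)+2))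
        = Real.cos (((j2.val:ℝ)+1)*Real.pi/((k:ℝ)+2)) :=
      mul_left_cancel₀ (show (2*(n:ℝ)) ≠ 0 by positivity) h
    have hθeq := Real.injOn_cos (hθmem j1) (hθmem j2) h2
    have h3 : ((j1.val:ℝ)+1) * Real.pi = ((j2.val:ℝ)+1) * Real.pi := by
      have := congrArg (fun x => x * ((k:ℝ)+2)) hθeq
      simpa [div_mul_cancel₀, hk2] using this
    have h4 := mul_right_cancel₀ Real.pi_ne_zero h3
    have h5 : (j1.val:ℝ) = (j2.val:ℝ) := by linarith
    exact Fin.ext (Nat.cast_injective h5)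
  · -- roots
    intro j
    set θ : ℝ := ((j.val:ℝ)+1)*Real.pi/((k:ℝ)+2) with hθdef
    have hθpos : 0 < θ := by
      apply div_pos (by positivity) (by positivity)
    have hθlt : θ < Real.pi := by
      rw [hθdef, div_lt_iff₀ (by positivity)]
      have h0 : (j.val:ℕ) ≤ k := by omega
      have h1 : (j.val:ℝ) ≤ (k:ℝ) := Nat.cast_le.2 h0
      nlinarith [Real.pi_pos]
    have hsin : Real.sin (((k:ℝ)+2) * θ) = 0 := by
      have : ((k:ℝ)+2) * θ = ((j.val:ℝ)+1) * Real.pi := by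
        rw [hθdef]; field_simp
      rw [this]
      have : ((j.val:ℝ)+1) = ((j.val+1 : ℕ) : ℝ) := by push_cast; ring
      rw [this, Real.sin_nat_mul_pi]
    apply my_root_of_eigen Q _ (fun i => Real.sin (((i.val:ℝ)+1) * θ))
    · intro hv0
      have := congrFun hv0 0
      simp only [Pi.zero_apply] at this
      have hpos : 0 < Real.sin (((0:ℝ)+1) * θ) := by
        rw [zero_add, one_mul]
        exact Real.sin_pos_of_pos_of_lt_pi hθpos hθlt
      rw [show (((0 : Fin (k+1)).val : ℝ)+1) = ((0:ℝ)+1) by simp] at this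
      linarith
    · ext i
      rw [Matrix.mulVec, dotProduct]
      simp only [Pi.smul_apply, smul_eq_mul]
      have := my_path_row k (n:ℝ) θ hsin i
      rw [hQ]
      convert this using 2
      rfl


variable (n' k : ℕ)

noncomputable section

def myBs : Matrix (Fin (n'+1)) (Fin (n'+1)) ℝ[X] :=
  Matrix.of fun a c => if a = c then 1 else if c = 0 then -1 else 0

def myCs : Matrix (Fin (n'+1)) (Fin (n'+1)) ℝ[X] :=
  Matrix.of fun c b => if c = b then 1 else if b = 0 then 1 else 0

def myT : Matrix (Fin (n'+1)) (Fin (n'+1)) ℝ[X] :=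
  Matrix.of fun a b => if a = 0 then (if b = 0 then ((n'+1 : ℕ) : ℝ[X]) else 1) else 0

def myJ : Matrix (Fin (n'+1)) (Fin (n'+1)) ℝ[X] := Matrix.of fun _ _ => 1

lemma myBC : myBs n' * myCs n' = 1 := by
  ext a b
  rw [Matrix.mul_apply]
  by_cases hb : b = 0
  · subst hb
    have hCs : ∀ c, myCs n' c 0 = 1 := by
      intro c; by_cases hc : c = 0 <;> simp [myCs, hc]
    simp only [hCs, mul_one]
    have hsplit : ∀ c : Fin (n'+1), myBs n' a c
        = (if a = c then 1 else 0) + (if c = 0 then (if a = 0 then 0 else -1) else 0) := by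
      intro c
      by_cases h1 : a = c <;> by_cases h2 : c = 0 <;> by_cases h3 : a = 0 <;>
        simp_all [myBs]
    rw [Finset.sum_congr rfl fun c _ => hsplit c, Finset.sum_add_distrib]
    rw [Finset.sum_ite_eq Finset.univ a (fun _ => (1:ℝ[X])), Finset.sum_ite_eq' Finset.univ 0]
    by_cases ha : a = 0 <;> simp [ha, Matrix.one_apply]
  · have hCs : ∀ c, myCs n' c b = if c = b then 1 else 0 := by
      intro c; simp [myCs, hb]
    simp only [hCs, mul_ite, mul_one, mul_zero]
    rw [Finset.sum_ite_eq' Finset.univ b (fun c => myBs n' a c)]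
    simp [myBs, hb, Matrix.one_apply]

lemma myBJC : myBs n' * myJ n' * myCs n' = myT n' := by
  have hJC : myJ n' * myCs n' = Matrix.of fun _ b =>
      (if b = 0 then ((n'+1 : ℕ) : ℝ[X]) else 1) := by
    ext a b
    rw [Matrix.mul_apply]
    simp only [myJ, Matrix.of_apply, one_mul]
    by_cases hb : b = 0
    · subst hb
      have : ∀ c : Fin (n'+1), myCs n' c 0 = 1 := by
        intro c; by_cases hc : c = 0 <;> simp [myCs, hc]
      simp [this, Finset.sum_const]
    · have : ∀ c : Fin (n'+1), myCs n' c b = if c = b then 1 else 0 := by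
        intro c; simp [myCs, hb]
      simp only [this]
      rw [Finset.sum_ite_eq' Finset.univ b (fun _ => (1:ℝ[X]))]
      simp [hb]
  rw [Matrix.mul_assoc, hJC]
  ext a b
  rw [Matrix.mul_apply]
  have hrow : ∀ c : Fin (n'+1), myBs n' a c
      = (if a = c then 1 else 0) + (if c = 0 then (if a = 0 then 0 else -1) else 0) := by
    intro c
    by_cases h1 : a = c <;> by_cases h2 : c = 0 <;> by_cases h3 : a = 0 <;>
      simp_all [myBs]
  simp only [hrow, add_mul, Finset.sum_add_distrib, ite_mul, zero_mul, one_mul]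
  rw [Finset.sum_ite_eq Finset.univ a, Finset.sum_ite_eq' Finset.univ (0 : Fin (n'+1))]
  by_cases ha : a = 0 <;> by_cases hb : b = 0 <;> simp [ha, hb, myT] <;> push_cast <;> ring

def myE : (Fin (k+1) ⊕ (Fin (k+1) × Fin n')) ≃ (Fin (k+1) × Fin (n'+1)) where
  toFun := Sum.elim (fun i => (i, 0)) (fun p => (p.1, p.2.succ))
  invFun := fun x => Fin.cases (Sum.inl x.1) (fun a => Sum.inr (x.1, a)) x.2
  left_inv := by rintro (i | ⟨i, a⟩) <;> simp
  right_inv := by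
    rintro ⟨i, a⟩
    refine Fin.cases ?_ ?_ a <;> simp

def myPp : Matrix (Fin (k+1)) (Fin (k+1)) ℝ[X] :=
  Matrix.of fun i j => if i.val+1=j.val ∨ j.val+1=i.val then 1 else 0

lemma my_block_charpoly :
    (Matrix.charpoly (Matrix.of fun x y =>
        if x.1.val+1=y.1.val ∨ y.1.val+1=x.1.val then (1:ℝ) else 0 :
      Matrix (Fin (k+1) × Fin (n'+1)) (Fin (k+1) × Fin (n'+1)) ℝ))
    = Matrix.charpoly (Matrix.of fun i j =>
        if i.val+1=j.val ∨ j.val+1=i.val then ((n'+1 : ℕ):ℝ) else 0 :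
        Matrix (Fin (k+1)) (Fin (k+1)) ℝ) * X^((k+1)*n') := by
  classical
  set A : Matrix (Fin (k+1) × Fin (n'+1)) (Fin (k+1) × Fin (n'+1)) ℝ :=
    Matrix.of fun x y => if x.1.val+1=y.1.val ∨ y.1.val+1=x.1.val then (1:ℝ) else 0 with hA
  set Q : Matrix (Fin (k+1)) (Fin (k+1)) ℝ :=
    Matrix.of fun i j => if i.val+1=j.val ∨ j.val+1=i.val then ((n'+1 : ℕ):ℝ) else 0 with hQdef
  set BM : Matrix (Fin (k+1) × Fin (n'+1)) (Fin (k+1) × Fin (n'+1)) ℝ[X] :=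
    (1 : Matrix (Fin (k+1)) (Fin (k+1)) ℝ[X]) ⊗ₖ myBs n' with hBM
  set CM : Matrix (Fin (k+1) × Fin (n'+1)) (Fin (k+1) × Fin (n'+1)) ℝ[X] :=
    (1 : Matrix (Fin (k+1)) (Fin (k+1)) ℝ[X]) ⊗ₖ myCs n' with hCM
  have hBMCM : BM * CM = 1 := by
    rw [hBM, hCM, ← Matrix.mul_kronecker_mul, one_mul, myBC, Matrix.one_kronecker_one]
  have hdetBC : BM.det * CM.det = 1 := by
    rw [← Matrix.det_mul, hBMCM, Matrix.det_one]
  -- A.map C as kronecker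
  have hAmap : A.map C = myPp k ⊗ₖ myJ n' := by
    ext ⟨i, a⟩ ⟨j, b⟩
    simp [hA, myPp, myJ, Matrix.map_apply, apply_ite C, Matrix.kroneckerMap_apply]
  -- charmatrix
  have hchar : charmatrix A = (X : ℝ[X]) • (1 : Matrix (Fin (k+1) × Fin (n'+1)) (Fin (k+1) × Fin (n'+1)) ℝ[X]) - myPp k ⊗ₖ myJ n' := by
    rw [← hAmap]
    ext x y
    by_cases h : x = y
    · subst h; simp [charmatrix_apply_eq, Matrix.one_apply, Matrix.map_apply]
    · simp [charmatrix_apply_ne _ _ _ h, Matrix.one_apply, h, Matrix.map_apply]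
  -- conjugated matrix
  have hconj : BM * charmatrix A * CM = (X : ℝ[X]) • (1 : Matrix (Fin (k+1) × Fin (n'+1)) (Fin (k+1) × Fin (n'+1)) ℝ[X]) - myPp k ⊗ₖ myT n' := by
    rw [hchar, Matrix.mul_sub, Matrix.sub_mul, Matrix.mul_smul, Matrix.mul_one,
      Matrix.smul_mul, hBMCM]
    congr 1
    rw [hBM, hCM, ← Matrix.mul_kronecker_mul, ← Matrix.mul_kronecker_mul, one_mul, mul_one, myBJC]
  have hdet : (charmatrix A).det = ((X : ℝ[X]) • (1 : Matrix (Fin (k+1) × Fin (n'+1)) (Fin (k+1) × Fin (n'+1)) ℝ[X]) - myPp k ⊗ₖ myT n').det := by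
    rw [← hconj]
    rw [Matrix.det_mul, Matrix.det_mul]
    ring_nf
    rw [mul_comm (BM.det), mul_assoc, hdetBC, mul_one]
  -- reindex to blocks
  have hsub : ((X : ℝ[X]) • (1 : Matrix (Fin (k+1) × Fin (n'+1)) (Fin (k+1) × Fin (n'+1)) ℝ[X]) - myPp k ⊗ₖ myT n').submatrix (myE n' k) (myE n' k)
      = Matrix.fromBlocks (charmatrix Q)
          (Matrix.of fun i p => -(myPp k i p.1))
          0 ((X : ℝ[X]) • (1 : Matrix (Fin (k+1) × Fin n') (Fin (k+1) × Fin n') ℝ[X])) := by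
    ext x y
    rcases x with i | ⟨i, a⟩ <;> rcases y with j | ⟨j, b⟩ <;>
      simp only [Matrix.submatrix_apply, myE, Equiv.coe_fn_mk, Sum.elim_inl, Sum.elim_inr,
        Matrix.sub_apply, Matrix.smul_apply, Matrix.kroneckerMap_apply, smul_eq_mul,
        Matrix.fromBlocks_apply₁₁, Matrix.fromBlocks_apply₁₂, Matrix.fromBlocks_apply₂₁,
        Matrix.fromBlocks_apply₂₂, Matrix.of_apply, Matrix.zero_apply]
    · -- inl inl
      by_cases hij : i = j
      · subst hij
        simp [Matrix.one_apply, myT, myPp, hQdef, charmatrix_apply_eq, apply_ite C]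
      · simp [Matrix.one_apply, myT, myPp, hQdef, charmatrix_apply_ne _ _ _ hij, hij,
          Prod.ext_iff, apply_ite C]
    · -- inl inr
      have hne : ((i, (0 : Fin (n'+1)))) ≠ ((j, b.succ)) := by
        simp [Prod.ext_iff]
        intro _
        exact (Fin.succ_ne_zero b).symm
      simp [Matrix.one_apply, hne, myT, Fin.succ_ne_zero]
    · -- inr inl
      have hne : ((i, a.succ)) ≠ ((j, (0 : Fin (n'+1)))) := by
        simp [Prod.ext_iff]
      simp [Matrix.one_apply, hne, myT, Fin.succ_ne_zero]
    · -- inr inr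
      have hiff : ((i, a.succ) = (j, b.succ)) ↔ ((i, a) = (j, b)) := by
        simp [Prod.ext_iff, Fin.succ_inj]
      simp [Matrix.one_apply, hiff, myT, Fin.succ_ne_zero]
  -- conclude
  have hcard : Fintype.card (Fin (k+1) × Fin n') = (k+1)*n' := by simp
  calc A.charpoly = (charmatrix A).det := rfl
    _ = (((X : ℝ[X]) • (1 : Matrix (Fin (k+1) × Fin (n'+1)) (Fin (k+1) × Fin (n'+1)) ℝ[X]) - myPp k ⊗ₖ myT n').submatrix (myE n' k) (myE n' k)).det := by
        rw [Matrix.det_submatrix_equiv_self, hdet]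
    _ = (charmatrix Q).det * ((X : ℝ[X]) • (1 : Matrix (Fin (k+1) × Fin n') (Fin (k+1) × Fin n') ℝ[X])).det := by
        rw [hsub, Matrix.det_fromBlocks_zero₂₁]
    _ = Q.charpoly * X^((k+1)*n') := by
        rw [Matrix.det_smul, Matrix.det_one, hcard, mul_one]
        rfl

/-- Energy of the sequential join of `k + 1` edgeless graphs on `n` vertices. -/
theorem stmt_19 (n k : ℕ)
    (G' : Fin (k + 1) → SimpleGraph (Fin n))
    (hedge : ∀ p, Nonempty (G' p ≃g (⊥ : SimpleGraph (Fin n))))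
    (Gtilde : SimpleGraph (Fin (k + 1) × Fin n)) [DecidableRel Gtilde.Adj]
    (hGtilde : ∀ x y : Fin (k + 1) × Fin n,
      Gtilde.Adj x y ↔
        ((x.1 = y.1 ∧ (G' x.1).Adj x.2 y.2)
          ∨ x.1.val + 1 = y.1.val ∨ y.1.val + 1 = x.1.val)) :
    energy (Gtilde.adjMatrix ℝ)
      = ∑ j : Fin (k + 1), |2 * (n : ℝ) * Real.cos ((j.val + 1) * Real.pi / (k + 2))| := by
  rcases n with _ | n'
  · -- n = 0 : everything is empty
    have h1 : (Gtilde.adjMatrix ℝ).charpoly = 1 := Matrix.det_isEmpty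
    simp [energy, h1]
  · -- n = n' + 1
    have hedge' : ∀ p (a b : Fin (n'+1)), ¬ (G' p).Adj a b := by
      intro p a b h
      have := (hedge p).some.map_adj_iff.mpr h
      simp at this
    have hadj : Gtilde.adjMatrix ℝ = Matrix.of fun x y =>
        if x.1.val+1=y.1.val ∨ y.1.val+1=x.1.val then (1:ℝ) else 0 := by
      ext x y
      rw [SimpleGraph.adjMatrix_apply, Matrix.of_apply]
      by_cases h : Gtilde.Adj x y
      · rw [if_pos h, if_pos]
        rcases (hGtilde x y).1 h with ⟨_, hc⟩ | h2
        · exact absurd hc (hedge' _ _ _)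
        · exact h2
      · rw [if_neg h, if_neg]
        intro hc
        exact h ((hGtilde x y).2 (Or.inr hc))
    set c : Fin (k+1) → ℝ :=
      fun j => 2*((n'+1 : ℕ):ℝ)*Real.cos (((j.val:ℝ)+1)*Real.pi/((k:ℝ)+2)) with hc
    have hQ : (Matrix.charpoly (Matrix.of fun i j =>
        if i.val+1=j.val ∨ j.val+1=i.val then ((n'+1 : ℕ):ℝ) else 0 :
        Matrix (Fin (k+1)) (Fin (k+1)) ℝ)) = ∏ j : Fin (k+1), (X - C (c j)) :=
      my_path_charpoly (n'+1) k (Nat.succ_pos n')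
    have hprodne : (∏ j : Fin (k+1), (X - C (c j))) ≠ 0 := by
      apply Finset.prod_ne_zero_iff.2
      intro j _
      exact X_sub_C_ne_zero (c j)
    have hroots : (Gtilde.adjMatrix ℝ).charpoly.roots
        = Finset.univ.val.map c + ((k+1)*n') • ({0} : Multiset ℝ) := by
      rw [hadj, my_block_charpoly n' k, hQ]
      rw [Polynomial.roots_mul (mul_ne_zero hprodne (pow_ne_zero _ X_ne_zero))]
      congr 1
      · have hrw : (∏ j : Fin (k+1), (X - C (c j)))
            = ((Finset.univ.val.map c).map fun a => X - C a).prod := by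
          rw [Finset.prod, Multiset.map_map]
          rfl
        rw [hrw, Polynomial.roots_multiset_prod_X_sub_C]
      · rw [Polynomial.roots_pow, Polynomial.roots_X]
    rw [energy, hroots]
    rw [Multiset.map_add, Multiset.sum_add, Multiset.map_map]
    have h2 : ((((k+1)*n') • ({0} : Multiset ℝ)).map fun x => |x|).sum = 0 := by
      simp [Multiset.nsmul_singleton]
    rw [h2, add_zero]
    have h3 : (Multiset.map ((fun x => |x|) ∘ c) Finset.univ.val).sum
        = ∑ j : Fin (k+1), |c j| := rfl
    rw [h3]
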